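/- For every integer N ≥ 1, the family of N+1 vectors v_n ∈ ℝ^{N+1} (n = 0,…,N), where v_n has j-th coordinate Q̂_n^N(j) for j = 0,…,N, is an orthonormal basis of the Euclidean space ℝ^{N+1}. -/

import Mathlib

/-- Rising Pochhammer symbol `(a)_k = a (a+1) ⋯ (a+k-1)`. -/
noncomputable def rise (a : ℝ) (k : ℕ) : ℝ := ∏ i ∈ Finset.range k, (a + i)

/-- Falling Pochhammer symbol `(a)_{-k} = a (a-1) ⋯ (a-k+1)`. -/
noncomputable def fall (a : ℝ) (k : ℕ) : ℝ := ∏ i ∈ Finset.range k, (a - i)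

/-- Hahn (discrete Chebyshev) polynomial with unit weights:
`Q_n^N(x) = Σ_{k=0}^n (−1)^k (n)_{−k} (n+1)_k (x)_{−k} / ((k!)² (N)_{−k})`. -/
noncomputable def hahnQ (N n : ℕ) (x : ℝ) : ℝ :=
  ∑ k ∈ Finset.range (n + 1),
    (-1 : ℝ) ^ k * fall (n : ℝ) k * rise ((n : ℝ) + 1) k * fall x k
      / ((Nat.factorial k : ℝ) ^ 2 * fall (N : ℝ) k)

/-- Squared norm `h_n^N = Σ_{x=0}^{N} (Q_n^N(x))²` on the grid `{0,…,N}`. -/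
noncomputable def hahnH (N n : ℕ) : ℝ :=
  ∑ x ∈ Finset.range (N + 1), (hahnQ N n (x : ℝ)) ^ 2

/-- Normalized Hahn polynomial `Q̂_n^N(x) = Q_n^N(x)/√(h_n^N)`. -/
noncomputable def hahnQhat (N n : ℕ) (x : ℝ) : ℝ := hahnQ N n x / Real.sqrt (hahnH N n)

section HahnAux



@[simp] lemma fall_zero (a : ℝ) : fall a 0 = 1 := by simp [fall]
@[simp] lemma rise_zero (a : ℝ) : rise a 0 = 1 := by simp [rise]

lemma fall_succ (a : ℝ) (k : ℕ) : fall a (k+1) = fall a k * (a - k) := by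
  simp [fall, Finset.prod_range_succ]

lemma fall_succ' (a : ℝ) (k : ℕ) : fall (a+1) (k+1) = (a+1) * fall a k := by
  rw [fall, Finset.prod_range_succ']
  rw [mul_comm]
  congr 1
  · norm_num
  · rw [fall]; apply Finset.prod_congr rfl; intro i _; push_cast; ring

lemma rise_succ (a : ℝ) (k : ℕ) : rise a (k+1) = rise a k * (a + k) := by
  simp [rise, Finset.prod_range_succ]

lemma rise_succ' (a : ℝ) (k : ℕ) : rise a (k+1) = a * rise (a+1) k := by
  rw [rise, Finset.prod_range_succ']
  rw [mul_comm]
  congr 1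
  · norm_num
  · rw [rise]; apply Finset.prod_congr rfl; intro i _; push_cast; ring

lemma rise_one (k : ℕ) : rise 1 k = (Nat.factorial k : ℝ) := by
  induction k with
  | zero => simp
  | succ k ih => rw [rise_succ, ih, Nat.factorial_succ]; push_cast; ring

lemma fall_cast_pos {m k : ℕ} (h : k ≤ m) : 0 < fall (m:ℝ) k := by
  apply Finset.prod_pos
  intro i hi
  have : i < k := Finset.mem_range.mp hi
  have : (i:ℝ) < m := by exact_mod_cast lt_of_lt_of_le this h
  linarith

lemma rise_pos {a : ℝ} (ha : 0 < a) (k : ℕ) : 0 < rise a k := by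
  apply Finset.prod_pos
  intro i _
  positivity

lemma fall_cast_zero {m k : ℕ} (h : m < k) : fall (m:ℝ) k = 0 := by
  apply Finset.prod_eq_zero (Finset.mem_range.mpr h)
  simp

lemma fall_step (x : ℝ) (j : ℕ) : fall (x+1) (j+1) - fall x (j+1) = ((j:ℝ)+1) * fall x j := by
  rw [fall_succ', fall_succ]; ring

/-- coefficient of generalized Hahn polynomial (α = β = a), times weight basis. -/
noncomputable def hd (a M n k : ℕ) : ℝ :=
  (-1)^k * fall (n:ℝ) k * rise ((n:ℝ) + 2*a + 1) k
    / (rise ((a:ℝ)+1) k * fall (M:ℝ) k * (Nat.factorial k : ℝ))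
noncomputable def hB (a M k : ℕ) (x : ℝ) : ℝ :=
  fall (x + (a:ℝ)) (a + k) * fall ((M:ℝ) + (a:ℝ) - x) a

noncomputable def hG (a M n : ℕ) (x : ℝ) : ℝ :=
  ∑ k ∈ Finset.range (n+1), hd a M n k * hB a M k x

lemma hB_diff (a M k : ℕ) (x : ℝ) :
    hB (a+1) M k x - hB (a+1) M k (x-1)
      = ((a:ℝ)+k+1) * ((M:ℝ)+1-k) * hB a (M+1) k x
        - (2*(a:ℝ)+k+2) * hB a (M+1) (k+1) x := by
  unfold hB
  rw [show a+1+k = (a+k)+1 from by omega, show a+(k+1) = (a+k)+1 from by omega]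
  push_cast
  rw [show x + ((a:ℝ)+1) = (x+(a:ℝ))+1 by ring,
      show x - 1 + ((a:ℝ)+1) = x+(a:ℝ) by ring,
      show (M:ℝ) + ((a:ℝ)+1) - x = (((M:ℝ)+(a:ℝ)-x)+1) by ring,
      show (M:ℝ) + ((a:ℝ)+1) - (x-1) = (((M:ℝ)+(a:ℝ)-x)+1)+1 by ring,
      show (M:ℝ) + 1 + (a:ℝ) - x = ((M:ℝ)+(a:ℝ)-x)+1 by ring]
  rw [fall_succ', fall_succ (x + (a:ℝ)) (a+k), fall_succ ((M:ℝ)+(a:ℝ)-x+1) a,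
      fall_succ' ((M:ℝ)+(a:ℝ)-x+1) a]
  push_cast
  ring

lemma factorial_cast_succ (i : ℕ) :
    ((Nat.factorial (i+1) : ℕ) : ℝ) = ((i:ℝ)+1) * (Nat.factorial i : ℝ) := by
  rw [Nat.factorial_succ]; push_cast; ring

lemma hd_rec (a M n i : ℕ) (hi : i ≤ n) (hnM : n ≤ M) :
    ((a:ℝ)+1) * ((M:ℝ)+1) * hd a (M+1) (n+1) (i+1)
      = hd (a+1) M n (i+1) * ((a:ℝ)+(i:ℝ)+2) * ((M:ℝ)-(i:ℝ))
        - hd (a+1) M n i * (2*(a:ℝ)+(i:ℝ)+2) := by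
  have hA : (0:ℝ) < rise ((a:ℝ)+2) i := rise_pos (by positivity) i
  have hfM : (0:ℝ) < fall (M:ℝ) i := fall_cast_pos (le_trans hi hnM)
  have hfact : (0:ℝ) < (Nat.factorial i : ℝ) := by positivity
  set s : ℝ := (-1)^i * fall (n:ℝ) i * rise ((n:ℝ)+2*(a:ℝ)+3) i
      / (rise ((a:ℝ)+2) i * fall (M:ℝ) i * (Nat.factorial i : ℝ)) with hs
  have h3 : hd (a+1) M n i = s := by
    unfold hd
    rw [hs]
    push_cast
    rw [show (n:ℝ)+2*((a:ℝ)+1)+1 = ((n:ℝ)+2*(a:ℝ)+3) by ring,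
        show (a:ℝ)+1+1 = ((a:ℝ)+2) by ring]
  have h1 : hd a (M+1) (n+1) (i+1)
      = -(((n:ℝ)+1) * ((n:ℝ)+2*(a:ℝ)+2) / ((((a:ℝ)+1) * ((M:ℝ)+1)) * ((i:ℝ)+1))) * s := by
    unfold hd
    rw [hs]
    push_cast
    rw [show (n:ℝ)+1+2*(a:ℝ)+1 = ((n:ℝ)+2*(a:ℝ)+2) by ring]
    rw [fall_succ' (n:ℝ) i, rise_succ' ((n:ℝ)+2*(a:ℝ)+2) i,
        rise_succ' ((a:ℝ)+1) i, fall_succ' (M:ℝ) i, factorial_cast_succ]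
    rw [show ((n:ℝ)+2*(a:ℝ)+2)+1 = ((n:ℝ)+2*(a:ℝ)+3) by ring,
        show ((a:ℝ)+1)+1 = ((a:ℝ)+2) by ring, pow_succ]
    field_simp
  rcases lt_or_eq_of_le (le_trans hi hnM) with hiM | hiM
  · have hMi : (0:ℝ) < (M:ℝ) - (i:ℝ) := by
      have : (i:ℝ) < M := by exact_mod_cast hiM
      linarith
    have h2 : hd (a+1) M n (i+1)
        = -((((n:ℝ)-(i:ℝ)) * ((n:ℝ)+2*(a:ℝ)+3+(i:ℝ)))
            / ((((a:ℝ)+2+(i:ℝ)) * ((M:ℝ)-(i:ℝ))) * ((i:ℝ)+1))) * s := by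
      unfold hd
      rw [hs]
      push_cast
      rw [show (n:ℝ)+2*((a:ℝ)+1)+1 = ((n:ℝ)+2*(a:ℝ)+3) by ring,
          show (a:ℝ)+1+1 = ((a:ℝ)+2) by ring]
      rw [fall_succ (n:ℝ) i, rise_succ ((n:ℝ)+2*(a:ℝ)+3) i,
          rise_succ ((a:ℝ)+2) i, fall_succ (M:ℝ) i, factorial_cast_succ, pow_succ]
      field_simp
    rw [h1, h2, h3]
    field_simp
    ring
  · -- i = M, hence i = n = M
    have hin : n = i := le_antisymm (hnM.trans hiM.symm.le) hi
    have h2 : hd (a+1) M n (i+1) = 0 := by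
      unfold hd
      rw [fall_succ (n:ℝ) i, hin]
      simp
    rw [h1, h2, h3, hin, ← hiM]
    have hii : ((i:ℝ)+1) ≠ 0 := by positivity
    field_simp
    ring

lemma hd_zero (a M n : ℕ) : hd a M n 0 = 1 := by simp [hd]

lemma hd_top (a M n k : ℕ) (h : n < k) : hd a M n k = 0 := by
  simp [hd, fall_cast_zero h]

lemma hG_rec (a M n : ℕ) (hnM : n ≤ M) (x : ℝ) :
    ((a:ℝ)+1) * ((M:ℝ)+1) * hG a (M+1) (n+1) x
      = hG (a+1) M n x - hG (a+1) M n (x-1) := by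
  unfold hG
  rw [Finset.mul_sum, ← Finset.sum_sub_distrib]
  have hrhs : ∀ k ∈ Finset.range (n+1),
      hd (a+1) M n k * hB (a+1) M k x - hd (a+1) M n k * hB (a+1) M k (x-1)
      = (hd (a+1) M n k * (((a:ℝ)+(k:ℝ)+1) * ((M:ℝ)+1-(k:ℝ))) * hB a (M+1) k x)
        - (hd (a+1) M n k * (2*(a:ℝ)+(k:ℝ)+2) * hB a (M+1) (k+1) x) := by
    intro k _
    linear_combination (hd (a+1) M n k) * (hB_diff a M k x)
  rw [Finset.sum_congr rfl hrhs, Finset.sum_sub_distrib]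
  have e1 := Finset.sum_range_succ'
      (fun k => ((a:ℝ)+1)*((M:ℝ)+1) * (hd a (M+1) (n+1) k * hB a (M+1) k x)) (n+1)
  have e2 := Finset.sum_range_succ'
      (fun k => hd (a+1) M n k * (((a:ℝ)+(k:ℝ)+1) * ((M:ℝ)+1-(k:ℝ))) * hB a (M+1) k x) n
  have e3 := Finset.sum_range_succ
      (fun i => hd (a+1) M n (i+1) * (((a:ℝ)+((i+1:ℕ):ℝ)+1) * ((M:ℝ)+1-((i+1:ℕ):ℝ)))
        * hB a (M+1) (i+1) x) n
  have e4 : hd (a+1) M n (n+1) * (((a:ℝ)+((n+1:ℕ):ℝ)+1) * ((M:ℝ)+1-((n+1:ℕ):ℝ)))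
        * hB a (M+1) (n+1) x = 0 := by
    rw [hd_top (a+1) M n (n+1) (by omega)]; ring
  have e6 : ∀ i ∈ Finset.range (n+1),
      ((a:ℝ)+1)*((M:ℝ)+1) * (hd a (M+1) (n+1) (i+1) * hB a (M+1) (i+1) x)
      = (hd (a+1) M n (i+1) * (((a:ℝ)+((i+1:ℕ):ℝ)+1) * ((M:ℝ)+1-((i+1:ℕ):ℝ)))
          * hB a (M+1) (i+1) x)
        - (hd (a+1) M n i * (2*(a:ℝ)+(i:ℝ)+2) * hB a (M+1) (i+1) x) := by
    intro i hi
    have hin : i ≤ n := by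
      have := Finset.mem_range.mp hi; omega
    push_cast
    linear_combination (hB a (M+1) (i+1) x) * (hd_rec a M n i hin hnM)
  rw [e1, e2, Finset.sum_congr rfl e6, Finset.sum_sub_distrib, e3, e4]
  rw [hd_zero, hd_zero]
  push_cast
  ring


lemma hG_neg_one (a M n : ℕ) : hG (a+1) M n (-1) = 0 := by
  unfold hG
  apply Finset.sum_eq_zero
  intro k _
  have h0 : hB (a+1) M k (-1) = 0 := by
    unfold hB
    push_cast
    rw [show (-1:ℝ) + ((a:ℝ)+1) = ((a:ℕ):ℝ) by push_cast; ring]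
    rw [fall_cast_zero (show a < a+1+k by omega), zero_mul]
  rw [h0, mul_zero]

lemma hG_top (a M n : ℕ) : hG (a+1) M n ((M:ℝ)+1) = 0 := by
  unfold hG
  apply Finset.sum_eq_zero
  intro k _
  have h0 : hB (a+1) M k ((M:ℝ)+1) = 0 := by
    unfold hB
    push_cast
    rw [show (M:ℝ) + ((a:ℝ)+1) - ((M:ℝ)+1) = ((a:ℕ):ℝ) by push_cast; ring]
    rw [fall_cast_zero (show a < a+1 by omega), mul_zero]
  rw [h0, mul_zero]

lemma habel (a M n j : ℕ) (hnM : n ≤ M) :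
    (((a:ℝ)+1) * ((M:ℝ)+1)) * ∑ x ∈ Finset.range (M+2), fall (x:ℝ) j * hG a (M+1) (n+1) (x:ℝ)
    = ∑ y ∈ Finset.range (M+1), (fall (y:ℝ) j - fall ((y:ℝ)+1) j) * hG (a+1) M n (y:ℝ) := by
  rw [Finset.mul_sum]
  have e0 : ∀ x ∈ Finset.range (M+2),
      (((a:ℝ)+1) * ((M:ℝ)+1)) * (fall (x:ℝ) j * hG a (M+1) (n+1) (x:ℝ))
      = fall (x:ℝ) j * hG (a+1) M n (x:ℝ) - fall (x:ℝ) j * hG (a+1) M n ((x:ℝ)-1) := by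
    intro x _
    linear_combination (fall (x:ℝ) j) * (hG_rec a M n hnM (x:ℝ))
  rw [Finset.sum_congr rfl e0, Finset.sum_sub_distrib]
  rw [Finset.sum_range_succ (fun x : ℕ => fall (x:ℝ) j * hG (a+1) M n (x:ℝ)) (M+1)]
  rw [Finset.sum_range_succ' (fun x : ℕ => fall (x:ℝ) j * hG (a+1) M n ((x:ℝ)-1)) (M+1)]
  have etop : hG (a+1) M n (((M+1:ℕ)):ℝ) = 0 := by push_cast; exact hG_top a M n
  have elow : hG (a+1) M n (((0:ℕ):ℝ)-1) = 0 := by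
    rw [show (((0:ℕ):ℝ)-1) = (-1:ℝ) by push_cast; ring]; exact hG_neg_one a M n
  rw [etop, elow, mul_zero, mul_zero, add_zero, add_zero]
  have e7 : ∀ i ∈ Finset.range (M+1),
      fall (((i+1:ℕ)):ℝ) j * hG (a+1) M n ((((i+1:ℕ)):ℝ)-1)
      = fall ((i:ℝ)+1) j * hG (a+1) M n (i:ℝ) := by
    intro i _
    push_cast
    rw [show ((i:ℝ)+1)-1 = (i:ℝ) by ring]
  rw [Finset.sum_congr rfl e7, ← Finset.sum_sub_distrib]
  apply Finset.sum_congr rfl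
  intro y _
  ring

lemma hKey (j : ℕ) : ∀ a M n : ℕ, j < n → n ≤ M →
    (∑ x ∈ Finset.range (M+1), fall (x:ℝ) j * hG a M n (x:ℝ)) = 0 := by
  induction j with
  | zero =>
    intro a M n hjn hnM
    obtain ⟨n', rfl⟩ : ∃ n', n = n'+1 := ⟨n-1, by omega⟩
    obtain ⟨M', rfl⟩ : ∃ M', M = M'+1 := ⟨M-1, by omega⟩
    have hne : (((a:ℝ)+1) * ((M':ℝ)+1)) ≠ 0 := by positivity
    have h := habel a M' n' 0 (by omega)
    have hz : ∑ y ∈ Finset.range (M'+1),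
        (fall (y:ℝ) 0 - fall ((y:ℝ)+1) 0) * hG (a+1) M' n' (y:ℝ) = 0 := by
      apply Finset.sum_eq_zero; intro y _; simp
    rw [hz] at h
    rw [show M'+1+1 = M'+2 from rfl]
    exact (mul_eq_zero.mp h).resolve_left hne
  | succ j ih =>
    intro a M n hjn hnM
    obtain ⟨n', rfl⟩ : ∃ n', n = n'+1 := ⟨n-1, by omega⟩
    obtain ⟨M', rfl⟩ : ∃ M', M = M'+1 := ⟨M-1, by omega⟩
    have hne : (((a:ℝ)+1) * ((M':ℝ)+1)) ≠ 0 := by positivity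
    have h := habel a M' n' (j+1) (by omega)
    have hstep : ∀ y ∈ Finset.range (M'+1),
        (fall (y:ℝ) (j+1) - fall ((y:ℝ)+1) (j+1)) * hG (a+1) M' n' (y:ℝ)
        = (-((j:ℝ)+1)) * (fall (y:ℝ) j * hG (a+1) M' n' (y:ℝ)) := by
      intro y _
      linear_combination (-(hG (a+1) M' n' (y:ℝ))) * (fall_step (y:ℝ) j)
    rw [Finset.sum_congr rfl hstep, ← Finset.mul_sum] at h
    rw [ih (a+1) M' n' (by omega) (by omega), mul_zero] at h
    rw [show M'+1+1 = M'+2 from rfl]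
    exact (mul_eq_zero.mp h).resolve_left hne

lemma hG_zero_eq (N n : ℕ) (x : ℝ) : hG 0 N n x = hahnQ N n x := by
  unfold hG hahnQ
  apply Finset.sum_congr rfl
  intro k _
  have hBe : hB 0 N k x = fall x k := by
    unfold hB
    norm_num
  rw [hBe]
  unfold hd
  rw [show ((n:ℝ)+2*((0:ℕ):ℝ)+1) = ((n:ℝ)+1) by push_cast; ring,
      show (((0:ℕ):ℝ)+1) = (1:ℝ) by push_cast; ring,
      rise_one]
  push_cast
  ring

lemma key_hahnQ (N n j : ℕ) (hj : j < n) (hnN : n ≤ N) :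
    ∑ x ∈ Finset.range (N+1), fall (x:ℝ) j * hahnQ N n (x:ℝ) = 0 := by
  have : ∀ x ∈ Finset.range (N+1),
      fall (x:ℝ) j * hahnQ N n (x:ℝ) = fall (x:ℝ) j * hG 0 N n (x:ℝ) := by
    intro x _; rw [hG_zero_eq]
  rw [Finset.sum_congr rfl this]
  exact hKey j 0 N n hj hnN

lemma ortho_lt (N m n : ℕ) (hmn : m < n) (hnN : n ≤ N) :
    ∑ x ∈ Finset.range (N+1), hahnQ N m (x:ℝ) * hahnQ N n (x:ℝ) = 0 := by
  have e1 : ∀ x ∈ Finset.range (N+1),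
      hahnQ N m (x:ℝ) * hahnQ N n (x:ℝ)
      = ∑ k ∈ Finset.range (m+1),
          ((-1:ℝ)^k * fall (m:ℝ) k * rise ((m:ℝ)+1) k / ((Nat.factorial k : ℝ)^2 * fall (N:ℝ) k))
            * (fall (x:ℝ) k * hahnQ N n (x:ℝ)) := by
    intro x _
    rw [hahnQ, Finset.sum_mul]
    apply Finset.sum_congr rfl
    intro k _
    ring
  rw [Finset.sum_congr rfl e1, Finset.sum_comm]
  apply Finset.sum_eq_zero
  intro k hk
  have hkm := Finset.mem_range.mp hk
  rw [← Finset.mul_sum, key_hahnQ N n k (by omega) hnN]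
  ring


noncomputable def hP (N n : ℕ) : Polynomial ℝ :=
  ∑ k ∈ Finset.range (n+1),
    Polynomial.C ((-1:ℝ)^k * fall (n:ℝ) k * rise ((n:ℝ)+1) k
        / ((Nat.factorial k:ℝ)^2 * fall (N:ℝ) k))
      * ∏ i ∈ Finset.range k, (Polynomial.X - Polynomial.C (i:ℝ))

lemma hP_eval (N n : ℕ) (x : ℝ) : (hP N n).eval x = hahnQ N n x := by
  unfold hP hahnQ
  rw [Polynomial.eval_finset_sum]
  apply Finset.sum_congr rfl
  intro k _
  rw [Polynomial.eval_mul, Polynomial.eval_C, Polynomial.eval_prod]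
  have : ∏ i ∈ Finset.range k, Polynomial.eval x (Polynomial.X - Polynomial.C (i:ℝ))
      = fall x k := by
    unfold fall
    apply Finset.prod_congr rfl
    intro i _
    simp
  rw [this]
  ring

lemma hP_basis_monic (k : ℕ) :
    (∏ i ∈ Finset.range k, (Polynomial.X - Polynomial.C (i:ℝ))).Monic :=
  Polynomial.monic_prod_of_monic _ _ (fun i _ => Polynomial.monic_X_sub_C _)

lemma hP_basis_natDegree (k : ℕ) :
    (∏ i ∈ Finset.range k, (Polynomial.X - Polynomial.C (i:ℝ))).natDegree = k := by
  rw [Polynomial.natDegree_prod_of_monic _ _ (fun i _ => Polynomial.monic_X_sub_C _)]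
  rw [Finset.sum_congr rfl (fun (i:ℕ) _ => Polynomial.natDegree_X_sub_C (i:ℝ))]
  simp

lemma hP_coeff (N n : ℕ) :
    (hP N n).coeff n = (-1:ℝ)^n * fall (n:ℝ) n * rise ((n:ℝ)+1) n
        / ((Nat.factorial n:ℝ)^2 * fall (N:ℝ) n) := by
  unfold hP
  rw [Polynomial.finset_sum_coeff, Finset.sum_range_succ]
  have h1 : ∀ k ∈ Finset.range n,
      (Polynomial.C ((-1:ℝ)^k * fall (n:ℝ) k * rise ((n:ℝ)+1) k
        / ((Nat.factorial k:ℝ)^2 * fall (N:ℝ) k))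
        * ∏ i ∈ Finset.range k, (Polynomial.X - Polynomial.C (i:ℝ))).coeff n = 0 := by
    intro k hk
    apply Polynomial.coeff_eq_zero_of_natDegree_lt
    calc (Polynomial.C _ * _).natDegree ≤ _ := Polynomial.natDegree_C_mul_le _ _
      _ = k := hP_basis_natDegree k
      _ < n := Finset.mem_range.mp hk
  rw [Finset.sum_eq_zero h1, zero_add, Polynomial.coeff_C_mul]
  have := (hP_basis_monic n).coeff_natDegree
  rw [hP_basis_natDegree n] at this
  rw [this, mul_one]

lemma hP_natDegree_le (N n : ℕ) : (hP N n).natDegree ≤ n := by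
  unfold hP
  apply Polynomial.natDegree_sum_le_of_forall_le
  intro k hk
  calc (Polynomial.C _ * _).natDegree ≤ _ := Polynomial.natDegree_C_mul_le _ _
    _ = k := hP_basis_natDegree k
    _ ≤ n := by have := Finset.mem_range.mp hk; omega

lemma hP_coeff_ne (N n : ℕ) (h : n ≤ N) : (hP N n).coeff n ≠ 0 := by
  rw [hP_coeff]
  have h1 : (0:ℝ) < fall (n:ℝ) n := fall_cast_pos le_rfl
  have h2 : (0:ℝ) < rise ((n:ℝ)+1) n := rise_pos (by positivity) n
  have h3 : (0:ℝ) < fall (N:ℝ) n := fall_cast_pos h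
  have h4 : (0:ℝ) < (Nat.factorial n : ℝ) := by positivity
  have h5 : ((-1:ℝ)^n) ≠ 0 := by
    rcases Nat.even_or_odd n with he | ho
    · rw [he.neg_one_pow]; norm_num
    · rw [ho.neg_one_pow]; norm_num
  apply div_ne_zero
  · exact mul_ne_zero (mul_ne_zero h5 h1.ne') h2.ne'
  · positivity

lemma hahnH_pos (N n : ℕ) (h : n ≤ N) : 0 < hahnH N n := by
  rw [hahnH]
  have hnn : (0:ℝ) ≤ ∑ x ∈ Finset.range (N+1), (hahnQ N n (x:ℝ))^2 :=
    Finset.sum_nonneg (fun (x:ℕ) _ => sq_nonneg (hahnQ N n (x:ℝ)))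
  rcases lt_or_eq_of_le hnn with hlt | heq
  · exact hlt
  exfalso
  have hz : ∀ x ∈ Finset.range (N+1), hahnQ N n (x:ℝ) = 0 := by
    intro x hx
    have := (Finset.sum_eq_zero_iff_of_nonneg
      (fun (x:ℕ) _ => sq_nonneg (hahnQ N n (x:ℝ)))).mp heq.symm x hx
    exact pow_eq_zero_iff (by norm_num) |>.mp this
  have hPz : hP N n = 0 := by
    apply Polynomial.eq_zero_of_natDegree_lt_card_of_eval_eq_zero' (hP N n)
      ((Finset.range (N+1)).image (Nat.cast : ℕ → ℝ))
    · intro i hi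
      obtain ⟨x, hx, rfl⟩ := Finset.mem_image.mp hi
      rw [hP_eval]
      exact hz x hx
    · rw [Finset.card_image_of_injective _ Nat.cast_injective, Finset.card_range]
      have := hP_natDegree_le N n
      omega
  have := hP_coeff_ne N n h
  rw [hPz] at this
  simp at this

lemma hahn_inner_ne (N : ℕ) {m n : ℕ} (hm : m ≤ N) (hn : n ≤ N) (hmn : m ≠ n) :
    ∑ x ∈ Finset.range (N+1), hahnQ N m (x:ℝ) * hahnQ N n (x:ℝ) = 0 := by
  rcases lt_or_gt_of_ne hmn with h | h
  · exact ortho_lt N m n h hn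
  · have e : ∀ x ∈ Finset.range (N+1),
        hahnQ N m (x:ℝ) * hahnQ N n (x:ℝ) = hahnQ N n (x:ℝ) * hahnQ N m (x:ℝ) :=
      fun x _ => mul_comm _ _
    rw [Finset.sum_congr rfl e]
    exact ortho_lt N n m h hm

end HahnAux

/-- The family of `N+1` vectors `v_n ∈ ℝ^{N+1}` with `(v_n)_j = Q̂_n^N(j)` is an
orthonormal basis of the Euclidean space `ℝ^{N+1}`. -/
theorem hahnQhat_orthonormal_basis (N : ℕ) (hN : 1 ≤ N) :
    Orthonormal ℝ (fun n : Fin (N + 1) =>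
      ((WithLp.equiv 2 (Fin (N + 1) → ℝ)).symm
        (fun j : Fin (N + 1) => hahnQhat N (n : ℕ) ((j : ℕ) : ℝ)) :
        EuclideanSpace ℝ (Fin (N + 1)))) ∧
    Submodule.span ℝ (Set.range (fun n : Fin (N + 1) =>
      ((WithLp.equiv 2 (Fin (N + 1) → ℝ)).symm
        (fun j : Fin (N + 1) => hahnQhat N (n : ℕ) ((j : ℕ) : ℝ)) :
        EuclideanSpace ℝ (Fin (N + 1))))) = ⊤ := by
  have horth : Orthonormal ℝ (fun n : Fin (N + 1) =>
      ((WithLp.equiv 2 (Fin (N + 1) → ℝ)).symm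
        (fun j : Fin (N + 1) => hahnQhat N (n : ℕ) ((j : ℕ) : ℝ)) :
        EuclideanSpace ℝ (Fin (N + 1)))) := by
    rw [orthonormal_iff_ite]
    intro m n
    have hin : (inner (𝕜 := ℝ)
        ((WithLp.equiv 2 (Fin (N + 1) → ℝ)).symm
          (fun j : Fin (N + 1) => hahnQhat N (m : ℕ) ((j : ℕ) : ℝ)))
        ((WithLp.equiv 2 (Fin (N + 1) → ℝ)).symm
          (fun j : Fin (N + 1) => hahnQhat N (n : ℕ) ((j : ℕ) : ℝ))) : ℝ)
        = ∑ x ∈ Finset.range (N+1), hahnQhat N (m:ℕ) (x:ℝ) * hahnQhat N (n:ℕ) (x:ℝ) := by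
      rw [PiLp.inner_apply]
      rw [← Fin.sum_univ_eq_sum_range (fun x : ℕ => hahnQhat N (m:ℕ) (x:ℝ) * hahnQhat N (n:ℕ) (x:ℝ)) (N+1)]
      apply Finset.sum_congr rfl
      intro j _
      simp [RCLike.inner_apply, conj_trivial, mul_comm]
    rw [hin]
    by_cases hmn : m = n
    · subst hmn
      rw [if_pos rfl]
      have hh := hahnH_pos N (m:ℕ) (Fin.is_le m)
      have hs : Real.sqrt (hahnH N (m:ℕ)) * Real.sqrt (hahnH N (m:ℕ)) = hahnH N (m:ℕ) :=
        Real.mul_self_sqrt hh.le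
      have : ∀ x ∈ Finset.range (N+1),
          hahnQhat N (m:ℕ) (x:ℝ) * hahnQhat N (m:ℕ) (x:ℝ)
          = (hahnQ N (m:ℕ) (x:ℝ))^2 / (Real.sqrt (hahnH N (m:ℕ)) * Real.sqrt (hahnH N (m:ℕ))) := by
        intro x _
        unfold hahnQhat
        ring
      rw [Finset.sum_congr rfl this, ← Finset.sum_div, hs]
      have : ∑ x ∈ Finset.range (N+1), (hahnQ N (m:ℕ) (x:ℝ))^2 = hahnH N (m:ℕ) := rfl
      rw [this, div_self hh.ne']
    · rw [if_neg hmn]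
      have : ∀ x ∈ Finset.range (N+1),
          hahnQhat N (m:ℕ) (x:ℝ) * hahnQhat N (n:ℕ) (x:ℝ)
          = (hahnQ N (m:ℕ) (x:ℝ) * hahnQ N (n:ℕ) (x:ℝ))
            / (Real.sqrt (hahnH N (m:ℕ)) * Real.sqrt (hahnH N (n:ℕ))) := by
        intro x _
        unfold hahnQhat
        ring
      rw [Finset.sum_congr rfl this, ← Finset.sum_div,
          hahn_inner_ne N (Fin.is_le m) (Fin.is_le n) (fun h => hmn (Fin.val_injective h)),
          zero_div]
  refine ⟨horth, ?_⟩
  apply LinearIndependent.span_eq_top_of_card_eq_finrank horth.linearIndependent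
  simp [finrank_euclideanSpace_fin]
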